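/- If G is a connected graph of order n, then σ₁(G) ≥ n − 1, with equality if and only if G is isomorphic to the star K_{1,n−1}. -/

import Mathlib

/-- Number of k-nearly independent vertex subsets: subsets whose induced subgraph has exactly k edges. -/
def sigmaK {V : Type*} [Fintype V] [DecidableEq V] (G : SimpleGraph V) [DecidableRel G.Adj] (k : ℕ) : ℕ :=
  (Finset.univ.filter fun s : Finset V =>
    (s.sym2.filter fun e => e ∈ G.edgeSet).card = k).card

/-- A graph is good if for every edge uv, N[u] ∪ N[v] = V(G). -/
def IsGoodGraph {V : Type*} (G : SimpleGraph V) : Prop :=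
  ∀ u v : V, G.Adj u v →
    (insert u (G.neighborSet u)) ∪ (insert v (G.neighborSet v)) = Set.univ

section Aux

open Finset

set_option linter.unusedSectionVars false

variable {V : Type*} [Fintype V] [DecidableEq V] (G : SimpleGraph V) [DecidableRel G.Adj]

private lemma pair_filter' {u v : V} (h : G.Adj u v) :
    (({u,v} : Finset V).sym2.filter fun e => e ∈ G.edgeSet) = {s(u,v)} := by
  ext e
  induction e using Sym2.ind with
  | _ a b =>
    simp only [Finset.mem_filter, Finset.mk_mem_sym2_iff, Finset.mem_insert, Finset.mem_singleton,
      SimpleGraph.mem_edgeSet, Sym2.eq, Sym2.rel_iff', Prod.mk.injEq, Prod.swap_prod_mk]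
    constructor
    · rintro ⟨⟨(rfl|rfl), (rfl|rfl)⟩, hab⟩
      · exact absurd hab (G.irrefl)
      · exact Or.inl ⟨rfl, rfl⟩
      · exact Or.inr ⟨rfl, rfl⟩
      · exact absurd hab (G.irrefl)
    · rintro (⟨rfl, rfl⟩|⟨rfl,rfl⟩)
      · exact ⟨⟨Or.inl rfl, Or.inr rfl⟩, h⟩
      · exact ⟨⟨Or.inr rfl, Or.inl rfl⟩, h.symm⟩

private lemma triple_filter' {u v w : V} (h : G.Adj u v) (hwu : w ≠ u) (hwv : w ≠ v)
    (h1 : ¬ G.Adj u w) (h2 : ¬ G.Adj v w) :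
    (({u,v,w} : Finset V).sym2.filter fun e => e ∈ G.edgeSet) = {s(u,v)} := by
  ext e
  induction e using Sym2.ind with
  | _ a b =>
    simp only [Finset.mem_filter, Finset.mk_mem_sym2_iff, Finset.mem_insert, Finset.mem_singleton,
      SimpleGraph.mem_edgeSet, Sym2.eq, Sym2.rel_iff', Prod.mk.injEq, Prod.swap_prod_mk]
    constructor
    · rintro ⟨⟨(rfl|rfl|rfl), (rfl|rfl|rfl)⟩, hab⟩
      · exact absurd hab (G.irrefl)
      · exact Or.inl ⟨rfl, rfl⟩
      · exact absurd hab h1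
      · exact Or.inr ⟨rfl, rfl⟩
      · exact absurd hab (G.irrefl)
      · exact absurd hab h2
      · exact absurd hab (fun hh => h1 hh.symm)
      · exact absurd hab (fun hh => h2 hh.symm)
      · exact absurd hab (G.irrefl)
    · rintro (⟨rfl, rfl⟩|⟨rfl,rfl⟩)
      · exact ⟨⟨Or.inl rfl, Or.inr (Or.inl rfl)⟩, h⟩
      · exact ⟨⟨Or.inr (Or.inl rfl), Or.inl rfl⟩, h.symm⟩

private lemma exists_parent' (hconn : G.Connected) (r v : V) (hv : v ≠ r) :
    ∃ u, G.Adj u v ∧ G.dist r u < G.dist r v := by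
  obtain ⟨p, hp, hlen⟩ := hconn.exists_path_of_dist v r
  obtain ⟨w, hadj, p', rfl⟩ := SimpleGraph.Walk.exists_eq_cons_of_ne hv p
  refine ⟨w, hadj.symm, ?_⟩
  have h1 : G.dist r w ≤ p'.length := by
    rw [SimpleGraph.dist_comm]; exact SimpleGraph.dist_le p'
  have h3 : G.dist r v = p'.length + 1 := by
    rw [SimpleGraph.dist_comm, ← hlen, SimpleGraph.Walk.length_cons]
  omega

private lemma star_iso' (c : V) (hc : ∀ x, x ≠ c → G.Adj c x)
    (hnc : ∀ x y, x ≠ c → y ≠ c → ¬ G.Adj x y) :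
    Nonempty (G ≃g completeBipartiteGraph (Fin 1) (Fin (Fintype.card V - 1))) := by
  classical
  have h1 : Fintype.card {x : V // x = c} = 1 := Fintype.card_subtype_eq c
  have h2 : Fintype.card {x : V // ¬ x = c} = Fintype.card V - 1 := by
    rw [Fintype.card_subtype_compl, Fintype.card_subtype_eq]
  let e : V ≃ (Fin 1 ⊕ Fin (Fintype.card V - 1)) :=
    (Equiv.sumCompl (· = c)).symm.trans
      (Equiv.sumCongr (Fintype.equivFinOfCardEq h1) (Fintype.equivFinOfCardEq h2))
  have hleft : ∀ a : V, (e a).isLeft = true ↔ a = c := by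
    intro a
    by_cases h : a = c
    · simp [e, Equiv.sumCompl_symm_apply_of_pos h, h]
    · simp [e, Equiv.sumCompl_symm_apply_of_neg h, h]
  have hright : ∀ x : V, ((e x).isRight = true) ↔ ¬ x = c := by
    intro x
    rw [← Sum.not_isLeft, not_iff_not]
    exact hleft x
  refine ⟨⟨e, ?_⟩⟩
  intro a b
  simp only [completeBipartiteGraph_adj, Equiv.coe_trans, Function.comp_apply]
  show ((e a).isLeft ∧ (e b).isRight ∨ (e a).isRight ∧ (e b).isLeft) ↔ G.Adj a b
  rw [hleft, hleft, hright, hright]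
  constructor
  · rintro (⟨rfl, hb⟩ | ⟨ha, rfl⟩)
    · exact hc b hb
    · exact (hc a ha).symm
  · intro hab
    by_cases ha : a = c
    · subst ha
      exact Or.inl ⟨rfl, fun hb => G.irrefl (hb ▸ hab)⟩
    · by_cases hb : b = c
      · subst hb
        exact Or.inr ⟨ha, rfl⟩
      · exact absurd hab (hnc a b ha hb)

private lemma iso_star' (φ : G ≃g completeBipartiteGraph (Fin 1) (Fin (Fintype.card V - 1))) :
    ∃ c : V, (∀ x, x ≠ c → G.Adj c x) ∧ (∀ x y, x ≠ c → y ≠ c → ¬ G.Adj x y) := by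
  classical
  set c := φ.symm (Sum.inl 0) with hc
  have hφx : ∀ x : V, x ≠ c → ∃ b, φ x = Sum.inr b := by
    intro x hx
    rcases hφ : φ x with a | b
    · exfalso
      apply hx
      have h0 : a = 0 := Subsingleton.elim _ _
      rw [hc, ← h0, ← hφ]
      exact (φ.symm_apply_apply x).symm
    · exact ⟨b, rfl⟩
  refine ⟨c, ?_, ?_⟩
  · intro x hx
    obtain ⟨b, hb⟩ := hφx x hx
    have : (completeBipartiteGraph (Fin 1) (Fin (Fintype.card V - 1))).Adj (φ c) (φ x) := by
      rw [hb, hc]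
      simp
    exact φ.map_rel_iff.mp this
  · intro x y hx hy hadj
    obtain ⟨b1, hb1⟩ := hφx x hx
    obtain ⟨b2, hb2⟩ := hφx y hy
    have := φ.map_rel_iff.mpr hadj
    rw [hb1, hb2] at this
    simp at this

private lemma star_sigma' (c : V) (hc : ∀ x, x ≠ c → G.Adj c x)
    (hnc : ∀ x y : V, x ≠ c → y ≠ c → ¬ G.Adj x y) :
    (Finset.univ.filter fun s : Finset V =>
      (s.sym2.filter fun e => e ∈ G.edgeSet).card = 1).card = Fintype.card V - 1 := by
  have himg : (Finset.univ.filter fun s : Finset V =>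
      (s.sym2.filter fun e => e ∈ G.edgeSet).card = 1)
      = (Finset.univ.erase c).image (fun x => ({c, x} : Finset V)) := by
    ext s
    simp only [mem_filter, mem_univ, true_and, mem_image, mem_erase]
    constructor
    · intro hs
      obtain ⟨e, he⟩ := Finset.card_eq_one.mp hs
      have key : ∀ a b : V, a = c → G.Adj a b → a ∈ s → b ∈ s →
          (s.sym2.filter fun e => e ∈ G.edgeSet) = {s(a,b)} → s = {c, b} := by
        rintro a b rfl hab has hbs hfe
        ext y
        rw [mem_insert, mem_singleton]
        constructor
        · intro hy
          by_cases hyc : y = a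
          · exact Or.inl hyc
          · by_cases hyb : y = b
            · exact Or.inr hyb
            · exfalso
              have hedge : s(a, y) ∈ s.sym2.filter (fun e => e ∈ G.edgeSet) := by
                rw [Finset.mem_filter, Finset.mk_mem_sym2_iff]
                exact ⟨⟨has, hy⟩, hc y hyc⟩
              rw [hfe, mem_singleton, Sym2.eq_iff] at hedge
              rcases hedge with ⟨_, h⟩ | ⟨h, _⟩
              · exact hyb h
              · exact hab.ne h
        · rintro (rfl | rfl)
          · exact has
          · exact hbs
      have hemem : e ∈ s.sym2.filter (fun e => e ∈ G.edgeSet) := he ▸ mem_singleton_self e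
      rw [Finset.mem_filter] at hemem
      obtain ⟨hesym, heedge⟩ := hemem
      induction e using Sym2.ind with
      | _ a b =>
        rw [SimpleGraph.mem_edgeSet] at heedge
        rw [Finset.mk_mem_sym2_iff] at hesym
        have hac : a = c ∨ b = c := by
          by_contra hcon
          push_neg at hcon
          exact hnc a b hcon.1 hcon.2 heedge
        rcases hac with rfl | rfl
        · exact ⟨b, ⟨heedge.ne', trivial⟩, (key a b rfl heedge hesym.1 hesym.2 he).symm⟩
        · refine ⟨a, ⟨heedge.ne, trivial⟩, ?_⟩
          exact (key b a rfl heedge.symm hesym.2 hesym.1 (by rw [he, Sym2.eq_swap])).symm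
    · rintro ⟨x, hx, rfl⟩
      rw [pair_filter' G (hc x hx.1)]
      exact card_singleton _
  rw [himg, card_image_of_injOn, card_erase_of_mem (mem_univ c), card_univ]
  intro x hx y hy hxy
  simp only [mem_coe, mem_erase] at hx hy
  have hxy' : ({c, x} : Finset V) = {c, y} := hxy
  have : x ∈ ({c, y} : Finset V) := by rw [← hxy']; simp
  rw [mem_insert, mem_singleton] at this
  rcases this with h | h
  · exact absurd h hx.1
  · exact h

private lemma filter_mem_sym2' (a b : V) :
    (Finset.univ.filter (· ∈ s(a,b))) = ({a, b} : Finset V) := by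
  ext x
  simp [Sym2.mem_iff]

end Aux

open Finset in
theorem stmt2 {V : Type*} [Fintype V] [DecidableEq V] (G : SimpleGraph V) [DecidableRel G.Adj]
    (hconn : G.Connected) :
    Fintype.card V - 1 ≤ sigmaK G 1 ∧
      (sigmaK G 1 = Fintype.card V - 1 ↔
        Nonempty (G ≃g completeBipartiteGraph (Fin 1) (Fin (Fintype.card V - 1)))) := by
  classical
  obtain ⟨r⟩ := hconn.nonempty
  set F := (Finset.univ.filter fun s : Finset V =>
    (s.sym2.filter fun e => e ∈ G.edgeSet).card = 1) with hFdef
  have hsig : sigmaK G 1 = F.card := rfl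
  have hpairF : ∀ {u v : V}, G.Adj u v → ({u,v} : Finset V) ∈ F := by
    intro u v h
    rw [hFdef, mem_filter]
    refine ⟨mem_univ _, ?_⟩
    rw [pair_filter' G h]
    exact card_singleton _
  have hdadex : ∀ v : V, v ≠ r → ∃ u, G.Adj u v ∧ G.dist r u < G.dist r v :=
    fun v hv => exists_parent' G hconn r v hv
  choose! dad hdadj hdlt using hdadex
  have hinj : Set.InjOn (fun v => ({dad v, v} : Finset V)) ↑(Finset.univ.erase r) := by
    intro a ha b hb hab
    rw [mem_coe, mem_erase] at ha hb
    by_contra hne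
    have hab' : ({dad a, a} : Finset V) = {dad b, b} := hab
    have ha2 : a ∈ ({dad b, b} : Finset V) := by rw [← hab']; simp
    have hb2 : b ∈ ({dad a, a} : Finset V) := by rw [hab']; simp
    rw [mem_insert, mem_singleton] at ha2 hb2
    rcases ha2 with h1 | h1
    · rcases hb2 with h2 | h2
      · have la := hdlt a ha.1
        have lb := hdlt b hb.1
        rw [← h2] at la
        rw [← h1] at lb
        omega
      · exact hne h2.symm
    · exact hne h1
  have himgsub : (Finset.univ.erase r).image (fun v => ({dad v, v} : Finset V)) ⊆ F := by
    intro s hs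
    obtain ⟨v, hv, rfl⟩ := mem_image.mp hs
    exact hpairF (hdadj v (mem_erase.mp hv).1)
  have hcard_img : ((Finset.univ.erase r).image (fun v => ({dad v, v} : Finset V))).card
      = Fintype.card V - 1 := by
    rw [card_image_of_injOn hinj, card_erase_of_mem (mem_univ r), card_univ]
  have hlow : Fintype.card V - 1 ≤ F.card := hcard_img ▸ card_le_card himgsub
  refine ⟨hsig ▸ hlow, ?_, ?_⟩
  · -- equality → iso
    intro heq
    rw [hsig] at heq
    have hFeq : (Finset.univ.erase r).image (fun v => ({dad v, v} : Finset V)) = F :=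
      Finset.eq_of_subset_of_card_le himgsub (by rw [hcard_img, heq])
    have hcard2 : ∀ s ∈ F, s.card = 2 := by
      intro s hs
      rw [← hFeq] at hs
      obtain ⟨v, hv, rfl⟩ := mem_image.mp hs
      exact card_pair (hdadj v (mem_erase.mp hv).1).ne
    have hgood : ∀ u v w : V, G.Adj u v → w ≠ u → w ≠ v → G.Adj u w ∨ G.Adj v w := by
      intro u v w huv hwu hwv
      by_contra hcon
      push_neg at hcon
      have hmem : ({u,v,w} : Finset V) ∈ F := by
        rw [hFdef, mem_filter]
        refine ⟨mem_univ _, ?_⟩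
        rw [triple_filter' G huv hwu hwv hcon.1 hcon.2]
        exact card_singleton _
      have h2 := hcard2 _ hmem
      have h3 : ({u,v,w} : Finset V).card = 3 := by
        rw [card_insert_of_notMem (by simp [huv.ne, Ne.symm hwu]),
          card_insert_of_notMem (by simp [Ne.symm hwv]), card_singleton]
      omega
    have hedgecard : G.edgeFinset.card ≤ Fintype.card V - 1 := by
      have hsub : G.edgeFinset.image (fun e => Finset.univ.filter (· ∈ e)) ⊆ F := by
        intro s hs
        obtain ⟨e, he, rfl⟩ := mem_image.mp hs
        induction e using Sym2.ind with
        | _ a b =>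
          rw [SimpleGraph.mem_edgeFinset, SimpleGraph.mem_edgeSet] at he
          rw [filter_mem_sym2']
          exact hpairF he
      have hinje : Set.InjOn (fun e => Finset.univ.filter (· ∈ e)) (↑G.edgeFinset : Set (Sym2 V)) := by
        intro e1 he1 e2 he2 h12
        rw [mem_coe, SimpleGraph.mem_edgeFinset] at he1 he2
        induction e1 using Sym2.ind with
        | _ a b =>
          induction e2 using Sym2.ind with
          | _ x y =>
            rw [SimpleGraph.mem_edgeSet] at he1 he2
            have h12' : ({a, b} : Finset V) = {x, y} := by
              rw [← filter_mem_sym2' a b, ← filter_mem_sym2' x y]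
              exact h12
            have haxy : a ∈ ({x, y} : Finset V) := by rw [← h12']; simp
            have hbxy : b ∈ ({x, y} : Finset V) := by rw [← h12']; simp
            rw [mem_insert, mem_singleton] at haxy hbxy
            rw [Sym2.eq_iff]
            rcases haxy with rfl | rfl
            · rcases hbxy with rfl | rfl
              · exact absurd rfl he1.ne
              · exact Or.inl ⟨rfl, rfl⟩
            · rcases hbxy with rfl | rfl
              · exact Or.inr ⟨rfl, rfl⟩
              · exact absurd rfl he1.ne
      calc G.edgeFinset.card
          = (G.edgeFinset.image (fun e => Finset.univ.filter (· ∈ e))).card :=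
            (card_image_of_injOn hinje).symm
        _ ≤ F.card := card_le_card hsub
        _ = Fintype.card V - 1 := heq
    by_cases hn1 : Fintype.card V ≤ 1
    · have hallr : ∀ x : V, x = r := fun x => Fintype.card_le_one_iff.mp hn1 x r
      exact star_iso' G r (fun x hx => absurd (hallr x) hx)
        (fun x y hx _ => absurd (hallr x) hx)
    · push_neg at hn1
      have hdegpos : ∀ v : V, 0 < G.degree v := by
        intro v
        obtain ⟨w, hw⟩ := Fintype.exists_ne_of_one_lt_card hn1 v
        obtain ⟨u, hu, _⟩ := exists_parent' G hconn w v (Ne.symm hw)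
        rw [SimpleGraph.degree_pos_iff_exists_adj]
        exact ⟨u, hu.symm⟩
      have hsum : ∑ v, G.degree v = 2 * G.edgeFinset.card :=
        SimpleGraph.sum_degrees_eq_twice_card_edges G
      have hleaf : ∃ l : V, G.degree l = 1 := by
        by_contra hno
        push_neg at hno
        have hge : ∀ v : V, 2 ≤ G.degree v := by
          intro v
          have h1 := hdegpos v
          have h2 := hno v
          omega
        have hbig : 2 * Fintype.card V ≤ ∑ v, G.degree v := by
          calc 2 * Fintype.card V = ∑ _v : V, 2 := by
                rw [Finset.sum_const, card_univ, smul_eq_mul, mul_comm]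
            _ ≤ _ := Finset.sum_le_sum (fun v _ => hge v)
        omega
      obtain ⟨l, hl⟩ := hleaf
      have hNl : (G.neighborFinset l).card = 1 := by
        rw [G.card_neighborFinset_eq_degree, hl]
      obtain ⟨c, hcN⟩ := Finset.card_eq_one.mp hNl
      have hadj_lc : G.Adj l c := by
        rw [← SimpleGraph.mem_neighborFinset, hcN]
        exact mem_singleton_self c
      have hstar : ∀ x, x ≠ c → G.Adj c x := by
        intro x hx
        by_cases hxl : x = l
        · subst hxl
          exact hadj_lc.symm
        · rcases hgood l c x hadj_lc hxl hx with h | h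
          · exfalso
            have hxN : x ∈ G.neighborFinset l := (G.mem_neighborFinset l x).mpr h
            rw [hcN, mem_singleton] at hxN
            exact hx hxN
          · exact h
      have hNc : G.neighborFinset c = Finset.univ.erase c := by
        ext x
        rw [SimpleGraph.mem_neighborFinset, mem_erase]
        constructor
        · intro h
          exact ⟨h.ne', mem_univ x⟩
        · rintro ⟨hx, _⟩
          exact hstar x hx
      have hdegc : G.degree c = Fintype.card V - 1 := by
        rw [← G.card_neighborFinset_eq_degree, hNc, card_erase_of_mem (mem_univ c), card_univ]
      have hinc : G.incidenceFinset c = G.edgeFinset := by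
        apply Finset.eq_of_subset_of_card_le
        · intro e he
          rw [SimpleGraph.mem_incidenceFinset] at he
          rw [SimpleGraph.mem_edgeFinset]
          exact he.1
        · rw [G.card_incidenceFinset_eq_degree, hdegc]
          exact hedgecard
      have hnoc : ∀ x y, x ≠ c → y ≠ c → ¬ G.Adj x y := by
        intro x y hx hy hadj
        have hmem : s(x,y) ∈ G.incidenceFinset c := by
          rw [hinc, SimpleGraph.mem_edgeFinset, SimpleGraph.mem_edgeSet]
          exact hadj
        rw [SimpleGraph.mem_incidenceFinset] at hmem
        have hcm := hmem.2
        rw [Sym2.mem_iff] at hcm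
        rcases hcm with h | h
        · exact hx h.symm
        · exact hy h.symm
      exact star_iso' G c hstar hnoc
  · -- iso → equality
    rintro ⟨φ⟩
    obtain ⟨c, hc, hnc⟩ := iso_star' G φ
    rw [hsig, hFdef]
    exact star_sigma' G c hc hnc
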